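/- Let Θ be a random angle with Kato–Jones density g_KJ(·; μ, γ, λ, ρ). Then the circular kurtosis and circular skewness of Batschelet satisfy ᾱ₂ := E[cos 2(Θ − μ)] = ρ γ cos λ and β̄₂ := E[sin 2(Θ − μ)] = ρ γ sin λ. -/

import Mathlib

open Real Complex intervalIntegral MeasureTheory Metric

lemma D_pos {ρ : ℝ} (hρ0 : 0 ≤ ρ) (hρ1 : ρ < 1) (θ : ℝ) :
    0 < 1 + ρ ^ 2 - 2 * ρ * Real.cos θ := by
  nlinarith [Real.cos_le_one θ, Real.neg_one_le_cos θ]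

lemma cauchy_int {ρ : ℝ} (hρ0 : 0 ≤ ρ) (hρ1 : ρ < 1) (n : ℕ) :
    (∫ θ in (0:ℝ)..(2*Real.pi),
        Complex.exp (n * θ * Complex.I) / ((1 + ρ ^ 2 - 2 * ρ * Real.cos θ : ℝ) : ℂ)) =
      2 * Real.pi * ρ ^ n / (1 - ρ ^ 2) := by
  set f : ℂ → ℂ := fun z : ℂ => z ^ n / (1 - (ρ:ℂ) * z) with hf
  have hne : ∀ z : ℂ, ‖z‖ ≤ 1 → (1 - (ρ:ℂ) * z) ≠ 0 := by
    intro z hz h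
    have h2 : (1:ℂ) = ρ * z := by linear_combination h
    have h1 : ‖(ρ:ℂ) * z‖ = ρ * ‖z‖ := by
      simp [map_mul, Complex.norm_real, Real.norm_eq_abs, _root_.abs_of_nonneg hρ0]
    have : (1:ℝ) = ρ * ‖z‖ := by
      calc (1:ℝ) = ‖(1:ℂ)‖ := by simp
      _ = ‖(ρ:ℂ) * z‖ := by rw [h2]
      _ = ρ * ‖z‖ := h1
    nlinarith [norm_nonneg z]
  have hdiff : DiffContOnCl ℂ f (ball (0:ℂ) 1) := by
    apply DifferentiableOn.diffContOnCl
    rw [closure_ball (0:ℂ) one_ne_zero]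
    intro z hz
    have hz1 : ‖z‖ ≤ 1 := by simpa [Complex.dist_eq] using hz
    exact ((differentiable_pow n).differentiableAt.div
      (((differentiable_const _).sub
        ((differentiable_const _).mul differentiable_id)).differentiableAt)
      (by simpa using hne z hz1)).differentiableWithinAt
  have hw : (ρ:ℂ) ∈ ball (0:ℂ) 1 := by
    simp [Complex.dist_eq, Complex.norm_real, Real.norm_eq_abs, _root_.abs_of_nonneg hρ0]
    exact hρ1
  have hcauchy := hdiff.circleIntegral_sub_inv_smul hw
  rw [circleIntegral] at hcauchy
  have key : ∀ θ : ℝ, deriv (circleMap 0 1) θ • (((circleMap 0 1 θ) - (ρ:ℂ))⁻¹ • f (circleMap 0 1 θ))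
      = Complex.I * (Complex.exp (n * θ * Complex.I) / ((1 + ρ^2 - 2*ρ*Real.cos θ : ℝ):ℂ)) := by
    intro θ
    have hz : circleMap 0 1 θ = Complex.exp (θ * Complex.I) := by simp [circleMap]
    rw [deriv_circleMap, hz, hf]
    set z := Complex.exp ((θ:ℂ) * Complex.I) with hzdef
    have hzabs : ‖z‖ = 1 := Complex.norm_exp_ofReal_mul_I θ
    have hz0 : z ≠ 0 := Complex.exp_ne_zero _
    have hzρ : z - (ρ:ℂ) ≠ 0 := by
      intro h
      have : z = (ρ:ℂ) := by linear_combination h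
      rw [this] at hzabs
      simp [Complex.norm_real, Real.norm_eq_abs, _root_.abs_of_nonneg hρ0] at hzabs
      exact absurd hzabs (by linarith)
    have h1ρz : (1 - (ρ:ℂ) * z) ≠ 0 := hne z hzabs.le
    have hDpos := D_pos hρ0 hρ1 θ
    have hDne : ((1 + ρ^2 - 2*ρ*Real.cos θ : ℝ):ℂ) ≠ 0 := by
      exact_mod_cast ne_of_gt hDpos
    have hzn : z ^ n = Complex.exp (n * θ * Complex.I) := by
      rw [← Complex.exp_nat_mul]; ring_nf
    have hexp : z = Complex.cos θ + Complex.sin θ * Complex.I := hzdef.trans (Complex.exp_mul_I _)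
    have hD : ((1 + ρ^2 - 2*ρ*Real.cos θ : ℝ):ℂ) * z = (z - ρ) * (1 - ρ * z) := by
      have hpyth : Complex.sin θ ^ 2 + Complex.cos θ ^ 2 = 1 := Complex.sin_sq_add_cos_sq _
      push_cast
      rw [hexp]
      linear_combination (-(ρ:ℂ))*hpyth + ((ρ:ℂ)*Complex.sin θ^2)*Complex.I_sq
    rw [smul_eq_mul, smul_eq_mul, ← hzn]
    simp only [circleMap, Complex.ofReal_one, one_mul, zero_add, ← hzdef]
    push_cast at hD hDne ⊢
    field_simp
    rw [div_eq_div_iff (by rwa [mul_comm] at h1ρz) (by convert hDne using 1; ring)]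
    linear_combination hD
  simp only [key] at hcauchy
  rw [intervalIntegral.integral_const_mul] at hcauchy
  have hI : (Complex.I : ℂ) ≠ 0 := Complex.I_ne_zero
  have hρ2 : ((1:ℂ) - (ρ:ℂ) * ρ) ≠ 0 := by
    have := hne (ρ:ℂ) (by simp [Complex.norm_real, Real.norm_eq_abs, _root_.abs_of_nonneg hρ0]; linarith)
    exact this
  apply mul_left_cancel₀ hI
  rw [hcauchy, hf, smul_eq_mul]
  push_cast
  have hρ2' : ((1:ℂ) - (ρ:ℂ)^2) ≠ 0 := by
    intro h; apply hρ2; linear_combination h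
  field_simp

lemma contD {ρ : ℝ} (hρ0 : 0 ≤ ρ) (hρ1 : ρ < 1) {h : ℝ → ℝ} (hh : Continuous h) :
    Continuous (fun θ => h θ / (1 + ρ ^ 2 - 2 * ρ * Real.cos θ)) :=
  hh.div (continuous_const.sub (continuous_const.mul Real.continuous_cos)) (fun θ => (D_pos hρ0 hρ1 θ).ne')

lemma intD {ρ : ℝ} (hρ0 : 0 ≤ ρ) (hρ1 : ρ < 1) {h : ℝ → ℝ} (hh : Continuous h) (a b : ℝ) :
    IntervalIntegrable (fun θ => h θ / (1 + ρ ^ 2 - 2 * ρ * Real.cos θ)) volume a b :=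
  (contD hρ0 hρ1 hh).intervalIntegrable a b

lemma base_int {ρ : ℝ} (hρ0 : 0 ≤ ρ) (hρ1 : ρ < 1) (n : ℕ) :
    ((∫ θ in (0:ℝ)..(2*Real.pi), Real.cos (n * θ) / (1 + ρ ^ 2 - 2 * ρ * Real.cos θ)) =
        2 * Real.pi * ρ ^ n / (1 - ρ ^ 2)) ∧
      ((∫ θ in (0:ℝ)..(2*Real.pi), Real.sin (n * θ) / (1 + ρ ^ 2 - 2 * ρ * Real.cos θ)) = 0) := by
  have h := cauchy_int hρ0 hρ1 n
  have heq : ∀ θ : ℝ, Complex.exp (n * θ * Complex.I) / ((1 + ρ ^ 2 - 2 * ρ * Real.cos θ : ℝ) : ℂ)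
      = ((Real.cos (n * θ) / (1 + ρ ^ 2 - 2 * ρ * Real.cos θ) : ℝ) : ℂ)
        + ((Real.sin (n * θ) / (1 + ρ ^ 2 - 2 * ρ * Real.cos θ) : ℝ) : ℂ) * Complex.I := by
    intro θ
    have hDne : ((1 + ρ ^ 2 - 2 * ρ * Real.cos θ : ℝ) : ℂ) ≠ 0 := by
      exact_mod_cast (D_pos hρ0 hρ1 θ).ne'
    rw [show (n : ℂ) * θ * Complex.I = ((n * θ : ℝ) : ℂ) * Complex.I by push_cast; ring,
      Complex.exp_mul_I, ← Complex.ofReal_cos, ← Complex.ofReal_sin]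
    push_cast
    field_simp
  simp only [heq] at h
  have h1 : IntervalIntegrable
      (fun θ : ℝ => ((Real.cos (n * θ) / (1 + ρ ^ 2 - 2 * ρ * Real.cos θ) : ℝ) : ℂ))
      volume 0 (2*Real.pi) :=
    (Complex.continuous_ofReal.comp (contD hρ0 hρ1 (Real.continuous_cos.comp (continuous_const.mul continuous_id)))).intervalIntegrable _ _
  have h2 : IntervalIntegrable
      (fun θ : ℝ => ((Real.sin (n * θ) / (1 + ρ ^ 2 - 2 * ρ * Real.cos θ) : ℝ) : ℂ) * Complex.I)
      volume 0 (2*Real.pi) :=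
    ((Complex.continuous_ofReal.comp (contD hρ0 hρ1 (Real.continuous_sin.comp (continuous_const.mul continuous_id)))).mul
      continuous_const).intervalIntegrable _ _
  have hoc : ∀ g : ℝ → ℝ, (∫ x in (0:ℝ)..(2*Real.pi), ((g x : ℝ) : ℂ))
      = ((∫ x in (0:ℝ)..(2*Real.pi), g x : ℝ) : ℂ) := fun g => RCLike.intervalIntegral_ofReal
  rw [intervalIntegral.integral_add h1 h2, intervalIntegral.integral_mul_const,
    hoc, hoc,
    show (2 * (Real.pi:ℂ) * (ρ:ℂ) ^ n / (1 - (ρ:ℂ) ^ 2))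
      = ((2 * Real.pi * ρ ^ n / (1 - ρ ^ 2) : ℝ) : ℂ) by push_cast; ring] at h
  rw [Complex.ext_iff] at h
  simp only [Complex.add_re, Complex.add_im, Complex.ofReal_re, Complex.ofReal_im,
    Complex.mul_re, Complex.mul_im, Complex.I_re, Complex.I_im] at h
  exact ⟨by linarith [h.1], by linarith [h.2]⟩

lemma cos_int {ρ : ℝ} (hρ0 : 0 ≤ ρ) (hρ1 : ρ < 1) (n : ℕ) :
    (∫ θ in (-Real.pi)..Real.pi, Real.cos (n * θ) / (1 + ρ ^ 2 - 2 * ρ * Real.cos θ)) =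
      2 * Real.pi * ρ ^ n / (1 - ρ ^ 2) := by
  have hper : Function.Periodic
      (fun θ => Real.cos (n * θ) / (1 + ρ ^ 2 - 2 * ρ * Real.cos θ)) (2 * Real.pi) := by
    intro θ
    simp only
    rw [show (n:ℝ) * (θ + 2 * Real.pi) = n * θ + n * (2 * Real.pi) by ring,
      Real.cos_add_nat_mul_two_pi, Real.cos_add_two_pi]
  have h := hper.intervalIntegral_add_eq (-Real.pi) 0
  rw [show -Real.pi + 2 * Real.pi = Real.pi by ring, zero_add] at h
  rw [h]
  exact (base_int hρ0 hρ1 n).1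

lemma sin_int {ρ : ℝ} (hρ0 : 0 ≤ ρ) (hρ1 : ρ < 1) (n : ℕ) :
    (∫ θ in (-Real.pi)..Real.pi, Real.sin (n * θ) / (1 + ρ ^ 2 - 2 * ρ * Real.cos θ)) = 0 := by
  have hper : Function.Periodic
      (fun θ => Real.sin (n * θ) / (1 + ρ ^ 2 - 2 * ρ * Real.cos θ)) (2 * Real.pi) := by
    intro θ
    simp only
    rw [show (n:ℝ) * (θ + 2 * Real.pi) = n * θ + n * (2 * Real.pi) by ring,
      Real.sin_add_nat_mul_two_pi, Real.cos_add_two_pi]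
  have h := hper.intervalIntegral_add_eq (-Real.pi) 0
  rw [show -Real.pi + 2 * Real.pi = Real.pi by ring, zero_add] at h
  rw [h]
  exact (base_int hρ0 hρ1 n).2

lemma cos_shift_int {ρ : ℝ} (hρ0 : 0 ≤ ρ) (hρ1 : ρ < 1) (n : ℕ) (ψ : ℝ) :
    (∫ θ in (-Real.pi)..Real.pi, Real.cos (n * θ + ψ) / (1 + ρ ^ 2 - 2 * ρ * Real.cos θ)) =
      2 * Real.pi * ρ ^ n * Real.cos ψ / (1 - ρ ^ 2) := by
  have hrw : (fun θ => Real.cos (n * θ + ψ) / (1 + ρ ^ 2 - 2 * ρ * Real.cos θ))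
      = fun θ => Real.cos ψ * (Real.cos (n * θ) / (1 + ρ ^ 2 - 2 * ρ * Real.cos θ))
        - Real.sin ψ * (Real.sin (n * θ) / (1 + ρ ^ 2 - 2 * ρ * Real.cos θ)) := by
    funext θ
    rw [Real.cos_add]
    ring
  rw [hrw, intervalIntegral.integral_sub
      ((intD hρ0 hρ1 (h := fun θ => Real.cos (↑n * θ)) (Real.continuous_cos.comp (continuous_const.mul continuous_id)) _ _).const_mul _)
      ((intD hρ0 hρ1 (h := fun θ => Real.sin (↑n * θ)) (Real.continuous_sin.comp (continuous_const.mul continuous_id)) _ _).const_mul _),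
    intervalIntegral.integral_const_mul, intervalIntegral.integral_const_mul,
    cos_int hρ0 hρ1 n, sin_int hρ0 hρ1 n]
  ring

lemma sin_shift_int {ρ : ℝ} (hρ0 : 0 ≤ ρ) (hρ1 : ρ < 1) (n : ℕ) (ψ : ℝ) :
    (∫ θ in (-Real.pi)..Real.pi, Real.sin (n * θ + ψ) / (1 + ρ ^ 2 - 2 * ρ * Real.cos θ)) =
      2 * Real.pi * ρ ^ n * Real.sin ψ / (1 - ρ ^ 2) := by
  have hrw : (fun θ => Real.sin (n * θ + ψ) / (1 + ρ ^ 2 - 2 * ρ * Real.cos θ))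
      = fun θ => Real.cos ψ * (Real.sin (n * θ) / (1 + ρ ^ 2 - 2 * ρ * Real.cos θ))
        + Real.sin ψ * (Real.cos (n * θ) / (1 + ρ ^ 2 - 2 * ρ * Real.cos θ)) := by
    funext θ
    rw [Real.sin_add]
    ring
  rw [hrw, intervalIntegral.integral_add
      ((intD hρ0 hρ1 (h := fun θ => Real.sin (↑n * θ)) (Real.continuous_sin.comp (continuous_const.mul continuous_id)) _ _).const_mul _)
      ((intD hρ0 hρ1 (h := fun θ => Real.cos (↑n * θ)) (Real.continuous_cos.comp (continuous_const.mul continuous_id)) _ _).const_mul _),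
    intervalIntegral.integral_const_mul, intervalIntegral.integral_const_mul,
    cos_int hρ0 hρ1 n, sin_int hρ0 hρ1 n]
  ring

/-- The Kato–Jones density. -/
noncomputable def gKJ (μ γ lam ρ θ : ℝ) : ℝ :=
  (1 / (2 * Real.pi)) *
    (1 + 2 * γ * (Real.cos (θ - μ) - ρ * Real.cos lam) /
      (1 + ρ ^ 2 - 2 * ρ * Real.cos (θ - μ - lam)))


/-- For the Kato–Jones distribution, the circular kurtosis `ᾱ₂ = E[cos 2(Θ − μ)]` equals
`ρ γ cos λ` and the circular skewness `β̄₂ = E[sin 2(Θ − μ)]` equals `ρ γ sin λ`. -/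
theorem kato_jones_circular_skewness_kurtosis
    (μ γ lam ρ : ℝ)
    (hμ : μ ∈ Set.Ico (-Real.pi) Real.pi)
    (hγ : γ ∈ Set.Ico (0 : ℝ) 1)
    (hρ : ρ ∈ Set.Ico (0 : ℝ) 1)
    (hlam : lam ∈ Set.Ico (-Real.pi) Real.pi)
    (hconstraint : (ρ * Real.cos lam - γ) ^ 2 + (ρ * Real.sin lam) ^ 2 ≤ (1 - γ) ^ 2) :
    (∫ θ in (-Real.pi)..Real.pi, Real.cos (2 * (θ - μ)) * gKJ μ γ lam ρ θ) =
      ρ * γ * Real.cos lam ∧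
    (∫ θ in (-Real.pi)..Real.pi, Real.sin (2 * (θ - μ)) * gKJ μ γ lam ρ θ) =
      ρ * γ * Real.sin lam := by
  obtain ⟨hρ0, hρ1⟩ := hρ
  have hπ : Real.pi ≠ 0 := Real.pi_ne_zero
  have h1ρ : (1:ℝ) - ρ ^ 2 ≠ 0 := by nlinarith
  -- common values
  have i2 := cos_shift_int hρ0 hρ1 2 (2*lam)
  have i32 := cos_shift_int hρ0 hρ1 3 (2*lam)
  have i12 := cos_shift_int hρ0 hρ1 1 (2*lam)
  have i33 := cos_shift_int hρ0 hρ1 3 (3*lam)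
  have i1l := cos_shift_int hρ0 hρ1 1 lam
  have j2 := sin_shift_int hρ0 hρ1 2 (2*lam)
  have j32 := sin_shift_int hρ0 hρ1 3 (2*lam)
  have j12 := sin_shift_int hρ0 hρ1 1 (2*lam)
  have j33 := sin_shift_int hρ0 hρ1 3 (3*lam)
  have j1l := sin_shift_int hρ0 hρ1 1 lam
  push_cast [one_mul] at i2 i32 i12 i33 i1l j2 j32 j12 j33 j1l
  -- integrability facts
  have ig2 : IntervalIntegrable (fun φ => Real.cos (2*φ + 2*lam) / (1 + ρ ^ 2 - 2 * ρ * Real.cos φ))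
      volume (-Real.pi) Real.pi :=
    intD hρ0 hρ1 (Real.continuous_cos.comp ((continuous_const.mul continuous_id).add continuous_const)) _ _
  have ig32 : IntervalIntegrable (fun φ => Real.cos (3*φ + 2*lam) / (1 + ρ ^ 2 - 2 * ρ * Real.cos φ))
      volume (-Real.pi) Real.pi :=
    intD hρ0 hρ1 (Real.continuous_cos.comp ((continuous_const.mul continuous_id).add continuous_const)) _ _
  have ig12 : IntervalIntegrable (fun φ => Real.cos (φ + 2*lam) / (1 + ρ ^ 2 - 2 * ρ * Real.cos φ))
      volume (-Real.pi) Real.pi :=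
    intD hρ0 hρ1 (Real.continuous_cos.comp (continuous_id.add continuous_const)) _ _
  have ig33 : IntervalIntegrable (fun φ => Real.cos (3*φ + 3*lam) / (1 + ρ ^ 2 - 2 * ρ * Real.cos φ))
      volume (-Real.pi) Real.pi :=
    intD hρ0 hρ1 (Real.continuous_cos.comp ((continuous_const.mul continuous_id).add continuous_const)) _ _
  have ig1l : IntervalIntegrable (fun φ => Real.cos (φ + lam) / (1 + ρ ^ 2 - 2 * ρ * Real.cos φ))
      volume (-Real.pi) Real.pi :=
    intD hρ0 hρ1 (Real.continuous_cos.comp (continuous_id.add continuous_const)) _ _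
  have jg2 : IntervalIntegrable (fun φ => Real.sin (2*φ + 2*lam) / (1 + ρ ^ 2 - 2 * ρ * Real.cos φ))
      volume (-Real.pi) Real.pi :=
    intD hρ0 hρ1 (Real.continuous_sin.comp ((continuous_const.mul continuous_id).add continuous_const)) _ _
  have jg32 : IntervalIntegrable (fun φ => Real.sin (3*φ + 2*lam) / (1 + ρ ^ 2 - 2 * ρ * Real.cos φ))
      volume (-Real.pi) Real.pi :=
    intD hρ0 hρ1 (Real.continuous_sin.comp ((continuous_const.mul continuous_id).add continuous_const)) _ _
  have jg12 : IntervalIntegrable (fun φ => Real.sin (φ + 2*lam) / (1 + ρ ^ 2 - 2 * ρ * Real.cos φ))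
      volume (-Real.pi) Real.pi :=
    intD hρ0 hρ1 (Real.continuous_sin.comp (continuous_id.add continuous_const)) _ _
  have jg33 : IntervalIntegrable (fun φ => Real.sin (3*φ + 3*lam) / (1 + ρ ^ 2 - 2 * ρ * Real.cos φ))
      volume (-Real.pi) Real.pi :=
    intD hρ0 hρ1 (Real.continuous_sin.comp ((continuous_const.mul continuous_id).add continuous_const)) _ _
  have jg1l : IntervalIntegrable (fun φ => Real.sin (φ + lam) / (1 + ρ ^ 2 - 2 * ρ * Real.cos φ))
      volume (-Real.pi) Real.pi :=
    intD hρ0 hρ1 (Real.continuous_sin.comp (continuous_id.add continuous_const)) _ _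
  -- final trig expansions
  have hc2 : Real.cos (2*lam) = 2 * Real.cos lam ^ 2 - 1 := Real.cos_two_mul lam
  have hs2l : Real.sin (2*lam) = 2 * Real.sin lam * Real.cos lam := Real.sin_two_mul lam
  have hc3 : Real.cos (3*lam) = Real.cos (2*lam) * Real.cos lam - Real.sin (2*lam) * Real.sin lam := by
    rw [show 3*lam = 2*lam + lam by ring, Real.cos_add]
  have hs3 : Real.sin (3*lam) = Real.sin (2*lam) * Real.cos lam + Real.cos (2*lam) * Real.sin lam := by
    rw [show 3*lam = 2*lam + lam by ring, Real.sin_add]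
  have hpy : Real.sin lam ^ 2 + Real.cos lam ^ 2 = 1 := Real.sin_sq_add_cos_sq lam
  constructor
  · -- cosine part
    set F : ℝ → ℝ := fun θ => Real.cos (2 * (θ - μ)) * gKJ μ γ lam ρ θ with hF
    have hperF : Function.Periodic F (2 * Real.pi) := by
      intro θ
      simp only [hF, gKJ]
      rw [show θ + 2*Real.pi - μ - lam = (θ - μ - lam) + 2*Real.pi by ring, Real.cos_add_two_pi,
        show θ + 2*Real.pi - μ = (θ - μ) + 2*Real.pi by ring, Real.cos_add_two_pi,
        show 2 * ((θ - μ) + 2*Real.pi) = (2*(θ-μ) + 2*Real.pi) + 2*Real.pi by ring,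
        Real.cos_add_two_pi, Real.cos_add_two_pi]
    have hshift : (∫ θ in (-Real.pi)..Real.pi, F θ)
        = ∫ φ in (-Real.pi)..Real.pi, F (φ + (μ + lam)) := by
      rw [intervalIntegral.integral_comp_add_right F (μ + lam)]
      have h2 := hperF.intervalIntegral_add_eq (-Real.pi + (μ + lam)) (-Real.pi)
      rw [show -Real.pi + (μ + lam) + 2*Real.pi = Real.pi + (μ + lam) by ring,
        show -Real.pi + 2*Real.pi = Real.pi by ring] at h2
      exact h2.symm
    have hpoint : ∀ φ : ℝ, F (φ + (μ + lam)) =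
        (1/(2*Real.pi)) * ( (1 + ρ^2 - 2*γ*ρ*Real.cos lam)
            * (Real.cos (2*φ + 2*lam) / (1 + ρ ^ 2 - 2 * ρ * Real.cos φ))
          - ρ * (Real.cos (3*φ + 2*lam) / (1 + ρ ^ 2 - 2 * ρ * Real.cos φ))
          - ρ * (Real.cos (φ + 2*lam) / (1 + ρ ^ 2 - 2 * ρ * Real.cos φ))
          + γ * (Real.cos (3*φ + 3*lam) / (1 + ρ ^ 2 - 2 * ρ * Real.cos φ))
          + γ * (Real.cos (φ + lam) / (1 + ρ ^ 2 - 2 * ρ * Real.cos φ)) ) := by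
      intro φ
      have hD := (D_pos hρ0 hρ1 φ).ne'
      have h1 : Real.cos (3*φ + 2*lam)
          = 2 * Real.cos (2*φ + 2*lam) * Real.cos φ - Real.cos (φ + 2*lam) := by
        rw [show 3*φ + 2*lam = (2*φ + 2*lam) + φ by ring, Real.cos_add]
        have h1a := Real.cos_sub (2*φ + 2*lam) φ
        rw [show 2*φ + 2*lam - φ = φ + 2*lam by ring] at h1a
        linear_combination h1a
      have h2 : Real.cos (3*φ + 3*lam)
          = 2 * Real.cos (2*φ + 2*lam) * Real.cos (φ + lam) - Real.cos (φ + lam) := by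
        rw [show 3*φ + 3*lam = (2*φ + 2*lam) + (φ + lam) by ring, Real.cos_add]
        have h2a := Real.cos_sub (2*φ + 2*lam) (φ + lam)
        rw [show 2*φ + 2*lam - (φ + lam) = φ + lam by ring] at h2a
        linear_combination h2a
      simp only [hF, gKJ]
      rw [show φ + (μ + lam) - μ - lam = φ by ring,
        show φ + (μ + lam) - μ = φ + lam by ring,
        show 2 * (φ + lam) = 2*φ + 2*lam by ring, h1, h2]
      field_simp
      ring
    rw [hshift]
    simp only [hpoint]
    rw [intervalIntegral.integral_const_mul,
      intervalIntegral.integral_add ((((ig2.const_mul _).sub (ig32.const_mul _)).sub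
        (ig12.const_mul _)).add (ig33.const_mul _)) (ig1l.const_mul _),
      intervalIntegral.integral_add (((ig2.const_mul _).sub (ig32.const_mul _)).sub
        (ig12.const_mul _)) (ig33.const_mul _),
      intervalIntegral.integral_sub ((ig2.const_mul _).sub (ig32.const_mul _)) (ig12.const_mul _),
      intervalIntegral.integral_sub (ig2.const_mul _) (ig32.const_mul _),
      intervalIntegral.integral_const_mul, intervalIntegral.integral_const_mul,
      intervalIntegral.integral_const_mul, intervalIntegral.integral_const_mul,
      intervalIntegral.integral_const_mul, i2, i32, i12, i33, i1l, hc3, hs2l, hc2]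
    field_simp
    linear_combination (-(2*ρ^3*γ*Real.cos lam)) * hpy
  · -- sine part
    set F : ℝ → ℝ := fun θ => Real.sin (2 * (θ - μ)) * gKJ μ γ lam ρ θ with hF
    have hperF : Function.Periodic F (2 * Real.pi) := by
      intro θ
      simp only [hF, gKJ]
      rw [show θ + 2*Real.pi - μ - lam = (θ - μ - lam) + 2*Real.pi by ring, Real.cos_add_two_pi,
        show θ + 2*Real.pi - μ = (θ - μ) + 2*Real.pi by ring, Real.cos_add_two_pi,
        show 2 * ((θ - μ) + 2*Real.pi) = (2*(θ-μ) + 2*Real.pi) + 2*Real.pi by ring,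
        Real.sin_add_two_pi, Real.sin_add_two_pi]
    have hshift : (∫ θ in (-Real.pi)..Real.pi, F θ)
        = ∫ φ in (-Real.pi)..Real.pi, F (φ + (μ + lam)) := by
      rw [intervalIntegral.integral_comp_add_right F (μ + lam)]
      have h2 := hperF.intervalIntegral_add_eq (-Real.pi + (μ + lam)) (-Real.pi)
      rw [show -Real.pi + (μ + lam) + 2*Real.pi = Real.pi + (μ + lam) by ring,
        show -Real.pi + 2*Real.pi = Real.pi by ring] at h2
      exact h2.symm
    have hpoint : ∀ φ : ℝ, F (φ + (μ + lam)) =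
        (1/(2*Real.pi)) * ( (1 + ρ^2 - 2*γ*ρ*Real.cos lam)
            * (Real.sin (2*φ + 2*lam) / (1 + ρ ^ 2 - 2 * ρ * Real.cos φ))
          - ρ * (Real.sin (3*φ + 2*lam) / (1 + ρ ^ 2 - 2 * ρ * Real.cos φ))
          - ρ * (Real.sin (φ + 2*lam) / (1 + ρ ^ 2 - 2 * ρ * Real.cos φ))
          + γ * (Real.sin (3*φ + 3*lam) / (1 + ρ ^ 2 - 2 * ρ * Real.cos φ))
          + γ * (Real.sin (φ + lam) / (1 + ρ ^ 2 - 2 * ρ * Real.cos φ)) ) := by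
      intro φ
      have hD := (D_pos hρ0 hρ1 φ).ne'
      have h1 : Real.sin (3*φ + 2*lam)
          = 2 * Real.sin (2*φ + 2*lam) * Real.cos φ - Real.sin (φ + 2*lam) := by
        rw [show 3*φ + 2*lam = (2*φ + 2*lam) + φ by ring, Real.sin_add]
        have h1a := Real.sin_sub (2*φ + 2*lam) φ
        rw [show 2*φ + 2*lam - φ = φ + 2*lam by ring] at h1a
        linear_combination h1a
      have h2 : Real.sin (3*φ + 3*lam)
          = 2 * Real.sin (2*φ + 2*lam) * Real.cos (φ + lam) - Real.sin (φ + lam) := by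
        rw [show 3*φ + 3*lam = (2*φ + 2*lam) + (φ + lam) by ring, Real.sin_add]
        have h2a := Real.sin_sub (2*φ + 2*lam) (φ + lam)
        rw [show 2*φ + 2*lam - (φ + lam) = φ + lam by ring] at h2a
        linear_combination h2a
      simp only [hF, gKJ]
      rw [show φ + (μ + lam) - μ - lam = φ by ring,
        show φ + (μ + lam) - μ = φ + lam by ring,
        show 2 * (φ + lam) = 2*φ + 2*lam by ring, h1, h2]
      field_simp
      ring
    rw [hshift]
    simp only [hpoint]
    rw [intervalIntegral.integral_const_mul,
      intervalIntegral.integral_add ((((jg2.const_mul _).sub (jg32.const_mul _)).sub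
        (jg12.const_mul _)).add (jg33.const_mul _)) (jg1l.const_mul _),
      intervalIntegral.integral_add (((jg2.const_mul _).sub (jg32.const_mul _)).sub
        (jg12.const_mul _)) (jg33.const_mul _),
      intervalIntegral.integral_sub ((jg2.const_mul _).sub (jg32.const_mul _)) (jg12.const_mul _),
      intervalIntegral.integral_sub (jg2.const_mul _) (jg32.const_mul _),
      intervalIntegral.integral_const_mul, intervalIntegral.integral_const_mul,
      intervalIntegral.integral_const_mul, intervalIntegral.integral_const_mul,
      intervalIntegral.integral_const_mul, j2, j32, j12, j33, j1l, hs3, hs2l, hc2]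
    field_simp
    ring
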